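/- Let h₁, ..., h_m : ℝ → ℝ be convex differentiable functions and let Y = ⋃_{p ∈ C} argmin p, where C is the set of functions p(x) = Σ_i α_i h_i(x) over all convex coefficient vectors α lying in a convex set A of admissible coefficient vectors containing, for any two members α, β ∈ A and any ζ ∈ [0,1], the vector ζα + (1−ζ)β. Then Y is a convex subset of ℝ. In particular, if x₁ ∈ argmin p₁ and x₂ ∈ argmin p₂ with p₁, p₂ ∈ C and x₁ < x_α < x₂ with p₁'(x_α) > 0 and p₂'(x_α) < 0, then there is ζ ∈ [0,1] with ζ p₁'(x_α) + (1−ζ) p₂'(x_α) = 0, so x_α ∈ argmin(ζ p₁ + (1−ζ) p₂) ⊆ Y. -/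

import Mathlib

open Set

-- convexity of the weighted sum
lemma sumConv (m : ℕ) (h : Fin m → ℝ → ℝ) (hconv : ∀ i, ConvexOn ℝ Set.univ (h i))
    (α : Fin m → ℝ) (hα : ∀ i, 0 ≤ α i) :
    ConvexOn ℝ Set.univ (fun x => ∑ i, α i * h i x) := by
  classical
  induction (Finset.univ : Finset (Fin m)) using Finset.induction with
  | empty => simpa using convexOn_const 0 convex_univ
  | insert _ _ hni ih =>
    simp only [Finset.sum_insert hni]
    exact ((hconv _).smul (hα _)).add ih

-- derivative of the weighted sum
lemma sumDeriv (m : ℕ) (h : Fin m → ℝ → ℝ) (hdiff : ∀ i, Differentiable ℝ (h i))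
    (α : Fin m → ℝ) (z : ℝ) :
    HasDerivAt (fun x => ∑ i, α i * h i x) (∑ i, α i * deriv (h i) z) z := by
  apply HasDerivAt.fun_sum
  intro i _
  exact ((hdiff i z).hasDerivAt).const_mul (α i)

-- convex + deriv zero ⇒ global min
lemma globalMin {f : ℝ → ℝ} (hf : ConvexOn ℝ Set.univ f)
    (hd : ∀ x, DifferentiableAt ℝ f x) {z : ℝ} (hz : deriv f z = 0) (y : ℝ) :
    f z ≤ f y := by
  rcases lt_trichotomy y z with hlt | heq | hgt
  · have := hf.slope_le_deriv (mem_univ y) (mem_univ z) hlt (hd z)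
    rw [hz, slope_def_field, div_nonpos_iff] at this
    rcases this with ⟨h1, h2⟩ | ⟨h1, h2⟩
    · linarith
    · linarith
  · rw [heq]
  · have := hf.deriv_le_slope (mem_univ z) (mem_univ y) hgt (hd z)
    rw [hz, slope_def_field, div_nonneg_iff] at this
    rcases this with ⟨h1, h2⟩ | ⟨h1, h2⟩
    · linarith
    · linarith

theorem stmt13 (m : ℕ) (h : Fin m → ℝ → ℝ) (A : Set (Fin m → ℝ))
    (hconv : ∀ i, ConvexOn ℝ Set.univ (h i))
    (hdiff : ∀ i, Differentiable ℝ (h i))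
    (hA : Convex ℝ A) (hAnn : ∀ α ∈ A, ∀ i, 0 ≤ α i)
    (hargmin : ∀ α ∈ A,
      ({x : ℝ | ∀ y, ∑ i, α i * h i x ≤ ∑ i, α i * h i y}).Nonempty) :
    Convex ℝ (⋃ α ∈ A, {x : ℝ | ∀ y, ∑ i, α i * h i x ≤ ∑ i, α i * h i y}) := by
  classical
  -- abbreviations
  set Y := ⋃ α ∈ A, {x : ℝ | ∀ y, ∑ i, α i * h i x ≤ ∑ i, α i * h i y} with hY
  -- key lemma: if a argmin of p_α, b argmin of p_β, a ≤ z ≤ b then z ∈ Y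
  have key : ∀ α ∈ A, ∀ β ∈ A, ∀ a b z : ℝ,
      (∀ y, ∑ i, α i * h i a ≤ ∑ i, α i * h i y) →
      (∀ y, ∑ i, β i * h i b ≤ ∑ i, β i * h i y) →
      a ≤ z → z ≤ b → z ∈ Y := by
    intro α hαA β hβA a b z ha hb haz hzb
    set pα : ℝ → ℝ := fun x => ∑ i, α i * h i x with hpα
    set pβ : ℝ → ℝ := fun x => ∑ i, β i * h i x with hpβ
    have dα : ∀ x, HasDerivAt pα (∑ i, α i * deriv (h i) x) x :=
      fun x => sumDeriv m h hdiff α x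
    have dβ : ∀ x, HasDerivAt pβ (∑ i, β i * deriv (h i) x) x :=
      fun x => sumDeriv m h hdiff β x
    have cα : ConvexOn ℝ Set.univ pα := sumConv m h hconv α (hAnn α hαA)
    have cβ : ConvexOn ℝ Set.univ pβ := sumConv m h hconv β (hAnn β hβA)
    -- derivative values at argmins are zero
    have hda : deriv pα a = 0 := by
      have : IsLocalMin pα a := by
        apply IsMinOn.isLocalMin (s := univ)
        · intro y _; exact ha y
        · exact Filter.univ_mem
      exact this.deriv_eq_zero
    have hdb : deriv pβ b = 0 := by
      have : IsLocalMin pβ b := by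
        apply IsMinOn.isLocalMin (s := univ)
        · intro y _; exact hb y
        · exact Filter.univ_mem
      exact this.deriv_eq_zero
    -- monotonicity of derivatives
    have hmonα := cα.monotoneOn_deriv (fun x _ => (dα x).differentiableAt)
    have hmonβ := cβ.monotoneOn_deriv (fun x _ => (dβ x).differentiableAt)
    have hDα : 0 ≤ deriv pα z := by
      have := hmonα (mem_univ a) (mem_univ z) haz
      rwa [hda] at this
    have hDβ : deriv pβ z ≤ 0 := by
      have := hmonβ (mem_univ z) (mem_univ b) hzb
      rwa [hdb] at this
    set u := deriv pα z
    set v := deriv pβ z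
    -- choose ζ with ζ u + (1-ζ) v = 0
    obtain ⟨ζ, hζ0, hζ1, hζeq⟩ : ∃ ζ : ℝ, 0 ≤ ζ ∧ ζ ≤ 1 ∧ ζ * u + (1 - ζ) * v = 0 := by
      rcases eq_or_lt_of_le hDα with hu0 | hu0
      · exact ⟨1, zero_le_one, le_refl 1, by rw [← hu0]; ring⟩
      · have h3 : u - v ≠ 0 := by linarith
        refine ⟨-v / (u - v), div_nonneg (by linarith) (by linarith), ?_, ?_⟩
        · rw [div_le_one (by linarith)]; linarith
        · rw [show -v / (u - v) * u + (1 - -v / (u - v)) * v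
              = -v / (u - v) * (u - v) + v by ring, div_mul_cancel₀ _ h3]
          ring
    -- the combined coefficient vector
    set γ : Fin m → ℝ := ζ • α + (1 - ζ) • β with hγ
    have hγA : γ ∈ A := hA hαA hβA hζ0 (by linarith) (by ring)
    set pγ : ℝ → ℝ := fun x => ∑ i, γ i * h i x with hpγ
    have hpγeq : ∀ x, pγ x = ζ * pα x + (1 - ζ) * pβ x := by
      intro x
      simp only [hpγ, hpα, hpβ, hγ, Pi.add_apply, Pi.smul_apply, smul_eq_mul,
        Finset.mul_sum, add_mul, Finset.sum_add_distrib]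
      congr 1 <;> (apply Finset.sum_congr rfl; intro i _; ring)
    have dγ : ∀ x, HasDerivAt pγ (∑ i, γ i * deriv (h i) x) x :=
      fun x => sumDeriv m h hdiff γ x
    have cγ : ConvexOn ℝ Set.univ pγ :=
      sumConv m h hconv γ (hAnn γ hγA)
    have hdγz : deriv pγ z = 0 := by
      have hu : HasDerivAt pα u z := (dα z).differentiableAt.hasDerivAt
      have hv : HasDerivAt pβ v z := (dβ z).differentiableAt.hasDerivAt
      have h2 : HasDerivAt (fun x => ζ * pα x + (1 - ζ) * pβ x)
          (ζ * u + (1 - ζ) * v) z := (hu.const_mul ζ).add (hv.const_mul (1 - ζ))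
      have h1 : HasDerivAt pγ (ζ * u + (1 - ζ) * v) z :=
        h2.congr_of_eventuallyEq (Filter.Eventually.of_forall fun x => hpγeq x)
      rw [h1.deriv, hζeq]
    have : ∀ y, pγ z ≤ pγ y :=
      globalMin cγ (fun x => (dγ x).differentiableAt) hdγz
    rw [hY]
    exact Set.mem_biUnion hγA this
  -- now the main convexity
  rintro x hx y hy t s ht hs hts
  simp only [hY, Set.mem_iUnion] at hx hy
  obtain ⟨α, hαA, hxα⟩ := hx
  obtain ⟨β, hβA, hyβ⟩ := hy
  have hx1 : t * x + s * x = x := by rw [← add_mul, hts, one_mul]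
  have hy1 : t * y + s * y = y := by rw [← add_mul, hts, one_mul]
  rcases le_total x y with hxy | hyx
  · have h1 : x ≤ t • x + s • y := by
      simp only [smul_eq_mul]
      linarith [mul_le_mul_of_nonneg_left hxy hs, hx1]
    have h2 : t • x + s • y ≤ y := by
      simp only [smul_eq_mul]
      linarith [mul_le_mul_of_nonneg_left hxy ht, hy1]
    exact key α hαA β hβA x y _ hxα hyβ h1 h2
  · have h1 : y ≤ t • x + s • y := by
      simp only [smul_eq_mul]
      linarith [mul_le_mul_of_nonneg_left hyx ht, hy1]
    have h2 : t • x + s • y ≤ x := by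
      simp only [smul_eq_mul]
      linarith [mul_le_mul_of_nonneg_left hyx hs, hx1]
    exact key β hβA α hαA y x _ hyβ hxα h1 h2
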